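/- arXiv:1005.1425 — 5 statements merged into one kernel-verified Lean document; each statement's English description precedes it below -/
import Mathlib

section
/- For any real b with 0 ≤ b < 1 and any positive integer k, ((1+b)^k - (1-b)^k)/((1+b)^k + (1-b)^k) ≥ 1 - e^{-kb}. -/
/-- Post-selective bias amplification bound. -/
theorem stmt6 (b : ℝ) (hb0 : 0 ≤ b) (hb1 : b < 1) (k : ℕ) (hk : 0 < k) :
    1 - Real.exp (-(k * b)) ≤
      ((1 + b) ^ k - (1 - b) ^ k) / ((1 + b) ^ k + (1 - b) ^ k) := by
  have hB0 : (0:ℝ) ≤ (1 - b) ^ k := pow_nonneg (by linarith) k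
  have hA0 : (0:ℝ) < (1 + b) ^ k := pow_pos (by linarith) k
  have hD : (0:ℝ) < (1 + b) ^ k + (1 - b) ^ k := by linarith
  rw [le_div_iff₀ hD]
  have heb : (1 - b) ^ k ≤ Real.exp (-(k * b)) := by
    have h1 : (1 - b) ≤ Real.exp (-b) := by
      have := Real.add_one_le_exp (-b); linarith
    calc (1 - b) ^ k ≤ (Real.exp (-b)) ^ k := pow_le_pow_left₀ (by linarith) h1 k
      _ = Real.exp (-(k * b)) := by
          rw [← Real.exp_nat_mul]; ring_nf
  have hD2 : (2:ℝ) ≤ (1 + b) ^ k + (1 - b) ^ k := by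
    have h2 := one_add_mul_le_pow (a := -b) (by linarith) k
    have h3 := one_add_mul_le_pow (a := b) (by linarith) k
    have e2 : (1 + -b) = 1 - b := by ring
    rw [e2] at h2
    linarith
  nlinarith [mul_le_mul_of_nonneg_left heb hD.le,
    mul_le_mul_of_nonneg_right hD2 hB0]
end

section
/- For all real b with 0 ≤ b < 1 and every positive integer k, 2·e^{kb} ≤ 1 + ((1+b)/(1-b))^k. -/
lemma key8 (b : ℝ) (hb0 : 0 ≤ b) : Real.exp (2 * b) * (1 - b) ≤ 1 + b := by
  set f : ℝ → ℝ := fun x => 1 + x - (1 - x) * Real.exp (2 * x) with hf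
  have hderiv : ∀ x : ℝ, HasDerivAt f (1 - (1 - 2 * x) * Real.exp (2 * x)) x := by
    intro x
    have h1 : HasDerivAt (fun x : ℝ => Real.exp (2 * x)) (Real.exp (2 * x) * 2) x := by
      have := ((hasDerivAt_id x).const_mul (2:ℝ)).exp
      simpa using this
    have h2 : HasDerivAt (fun x : ℝ => (1 - x) * Real.exp (2 * x))
        ((-1) * Real.exp (2 * x) + (1 - x) * (Real.exp (2 * x) * 2)) x := by
      have := ((hasDerivAt_const x (1:ℝ)).sub (hasDerivAt_id x)).mul h1
      exact this.congr_deriv (by simp only [Pi.sub_apply, id]; ring)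
    have h3 : HasDerivAt (fun x : ℝ => 1 + x) (0 + 1) x :=
      (hasDerivAt_const x (1:ℝ)).add (hasDerivAt_id x)
    have := h3.sub h2
    exact this.congr_deriv (by ring)
  have hdnn : ∀ x : ℝ, 0 ≤ 1 - (1 - 2 * x) * Real.exp (2 * x) := by
    intro x
    have h1 : 1 - 2 * x ≤ Real.exp (-(2 * x)) := by
      have := Real.add_one_le_exp (-(2 * x))
      linarith
    have h2 : (1 - 2 * x) * Real.exp (2 * x) ≤ Real.exp (-(2 * x)) * Real.exp (2 * x) :=
      mul_le_mul_of_nonneg_right h1 (Real.exp_pos _).le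
    rw [← Real.exp_add] at h2
    simp at h2
    linarith
  have hmono : Monotone f :=
    monotone_of_deriv_nonneg (fun x => (hderiv x).differentiableAt)
      (fun x => by rw [(hderiv x).deriv]; exact hdnn x)
  have h0 : f 0 = 0 := by simp [hf]
  have := hmono hb0
  rw [h0] at this
  simp only [hf] at this
  linarith

/-- For 0 ≤ b < 1 and k ≥ 1, 2·e^{kb} ≤ 1 + ((1+b)/(1-b))^k. -/
theorem stmt8 (b : ℝ) (hb0 : 0 ≤ b) (hb1 : b < 1) (k : ℕ) (hk : 1 ≤ k) :
    2 * Real.exp (k * b) ≤ 1 + ((1 + b) / (1 - b)) ^ k := by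
  have hb : (0:ℝ) < 1 - b := by linarith
  have hkey : Real.exp (2 * b) ≤ (1 + b) / (1 - b) :=
    (le_div_iff₀ hb).mpr (key8 b hb0)
  have hpow : Real.exp (2 * b) ^ k ≤ ((1 + b) / (1 - b)) ^ k :=
    pow_le_pow_left₀ (Real.exp_pos _).le hkey k
  have hE : Real.exp (2 * b) ^ k = Real.exp (k * b) ^ 2 := by
    rw [← Real.exp_nat_mul]
    rw [show Real.exp (↑k * b) ^ 2 = Real.exp (2 * (↑k * b)) by
      rw [two_mul, Real.exp_add, sq]]
    ring_nf
  have h1 : 2 * Real.exp (k * b) ≤ 1 + Real.exp (k * b) ^ 2 := by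
    nlinarith [sq_nonneg (Real.exp (k * b) - 1)]
  rw [hE] at hpow
  linarith
end

section
/- Let q be a positive integer and c = (c₁,...,c_m) a tuple of integers. Let κ be uniform on {0,...,q-1} and s uniform on {0,1}^m with complement s̄. Then E_κ[∏_{j=1}^m cos(2π·c_j·κ/q)] = P_s(∑_{j: s_j=1} c_j ≡ ∑_{j: s_j=0} c_j (mod q)). -/
open scoped Classical

lemma sum_exp (q : ℕ) (hq : 0 < q) (n : ℤ) :
    ∑ κ ∈ Finset.range q, Complex.exp (2 * Real.pi * n * κ / q * Complex.I)
      = if (q:ℤ) ∣ n then (q:ℂ) else 0 := by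
  have hq0 : (q:ℂ) ≠ 0 := Nat.cast_ne_zero.mpr hq.ne'
  set z : ℂ := 2 * Real.pi * n / q * Complex.I with hz
  have hterm : ∀ κ : ℕ, Complex.exp (2 * Real.pi * n * κ / q * Complex.I)
      = Complex.exp z ^ κ := by
    intro κ
    rw [← Complex.exp_nat_mul]
    congr 1
    rw [hz]
    ring
  simp only [hterm]
  by_cases hd : (q:ℤ) ∣ n
  · obtain ⟨k, hk⟩ := id hd
    have hz1 : Complex.exp z = 1 := by
      have : z = k * (2 * Real.pi * Complex.I) := by
        rw [hz, hk]; push_cast; field_simp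
      rw [this, Complex.exp_int_mul_two_pi_mul_I]
    simp [hd, hz1]
  · have hz1 : Complex.exp z ≠ 1 := by
      intro h
      rw [Complex.exp_eq_one_iff] at h
      obtain ⟨k, hk⟩ := h
      apply hd
      refine ⟨k, ?_⟩
      have hI : Complex.I ≠ 0 := Complex.I_ne_zero
      have hpi : (Real.pi : ℂ) ≠ 0 := by exact_mod_cast Real.pi_ne_zero
      have h3 : (2*(Real.pi:ℂ)*Complex.I) * n = (2*(Real.pi:ℂ)*Complex.I) * (q*k) := by
        rw [hz] at hk
        field_simp at hk
        linear_combination (2 * (Real.pi:ℂ) * Complex.I) * hk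
      have h4 := mul_left_cancel₀ (mul_ne_zero (mul_ne_zero two_ne_zero hpi) hI) h3
      exact_mod_cast h4
    rw [geom_sum_eq hz1]
    have hzq : Complex.exp z ^ q = 1 := by
      rw [← Complex.exp_nat_mul]
      have : (q:ℂ) * z = n * (2 * Real.pi * Complex.I) := by
        rw [hz]; field_simp
      rw [this, Complex.exp_int_mul_two_pi_mul_I]
    rw [hzq]
    simp [hd]

lemma prod_add_bool {m : ℕ} (a b : Fin m → ℂ) :
    ∏ j, (a j + b j) = ∑ s : Fin m → Bool, ∏ j, (if s j then a j else b j) := by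
  have h : ∀ j, a j + b j = ∑ t : Bool, (if t then a j else b j) := by
    intro j; simp
  simp only [h]
  rw [Finset.prod_univ_sum, Fintype.piFinset_univ]

/-- The expected product of cosines over κ equals the probability that a random
subset of the weights has sum congruent (mod q) to its complement's sum. -/
theorem stmt15 (m q : ℕ) (hq : 0 < q) (c : Fin m → ℤ) :
    (1 / q : ℝ) * ∑ κ ∈ Finset.range q, ∏ j,
        Real.cos (2 * Real.pi * (c j : ℝ) * κ / q)
      = (1 / 2 ^ m) * ∑ s : Fin m → Bool,
          (if Int.ModEq (q : ℤ) (∑ j, if s j then c j else 0)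
              (∑ j, if s j then 0 else c j) then (1:ℝ) else 0) := by
  have hqR : (q:ℝ) ≠ 0 := Nat.cast_ne_zero.mpr hq.ne'
  set D : (Fin m → Bool) → ℤ := fun s => ∑ j, (if s j then c j else -c j) with hD
  -- condition equivalence
  have hcond : ∀ s : Fin m → Bool,
      (Int.ModEq (q:ℤ) (∑ j, if s j then c j else 0) (∑ j, if s j then 0 else c j))
        ↔ (q:ℤ) ∣ D s := by
    intro s
    rw [Int.modEq_iff_dvd]
    have : (∑ j, if s j then (0:ℤ) else c j) - (∑ j, if s j then c j else 0) = -D s := by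
      rw [hD, ← Finset.sum_sub_distrib, ← Finset.sum_neg_distrib]
      refine Finset.sum_congr rfl fun j _ => ?_
      by_cases h : s j <;> simp [h]
    rw [this, dvd_neg]
  -- complex computation of the kappa sum
  have key : ((∑ κ ∈ Finset.range q, ∏ j,
        Real.cos (2 * Real.pi * (c j : ℝ) * κ / q) : ℝ) : ℂ)
      = (1/2^m) * ∑ s : Fin m → Bool, (if (q:ℤ) ∣ D s then (q:ℂ) else 0) := by
    simp only [Complex.ofReal_sum, Complex.ofReal_prod, Complex.ofReal_cos]
    have hterm : ∀ κ ∈ Finset.range q,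
        (∏ j, Complex.cos ((2 * Real.pi * (c j : ℝ) * κ / q : ℝ) : ℂ))
        = (1/2^m) * ∑ s : Fin m → Bool,
            Complex.exp (2 * Real.pi * (D s) * κ / q * Complex.I) := by
      intro κ _
      have hcos : ∀ j, Complex.cos ((2 * Real.pi * (c j : ℝ) * κ / q : ℝ) : ℂ)
          = (Complex.exp (((2 * Real.pi * (c j : ℝ) * κ / q : ℝ) : ℂ) * Complex.I)
            + Complex.exp (-((2 * Real.pi * (c j : ℝ) * κ / q : ℝ) : ℂ) * Complex.I)) * 2⁻¹ := by
        intro j; rw [Complex.cos, div_eq_mul_inv]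
      simp only [hcos]
      rw [Finset.prod_mul_distrib, Finset.prod_const, prod_add_bool]
      simp only [Finset.card_univ, Fintype.card_fin]
      rw [show ((2:ℂ)⁻¹)^m = 1/2^m by rw [one_div, inv_pow], mul_comm]
      congr 1
      refine Finset.sum_congr rfl fun s _ => ?_
      have h1 : ∀ j, (if s j
            then Complex.exp (((2 * Real.pi * (c j : ℝ) * κ / q : ℝ) : ℂ) * Complex.I)
            else Complex.exp (-((2 * Real.pi * (c j : ℝ) * κ / q : ℝ) : ℂ) * Complex.I))
          = Complex.exp ((2 * (Real.pi:ℂ) * (if s j then (c j : ℂ) else -(c j : ℂ)) * κ / q) * Complex.I) := by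
        intro j
        by_cases h : s j <;> simp only [h, if_true, if_false] <;> · congr 1; push_cast; ring
      simp only [h1, ← Complex.exp_sum]
      congr 1
      have hDs : ((D s : ℤ) : ℂ) = ∑ j, (if s j then (c j : ℂ) else -(c j : ℂ)) := by
        rw [hD]; push_cast [apply_ite (Int.cast : ℤ → ℂ)]; rfl
      rw [hDs, Finset.mul_sum, Finset.sum_mul, Finset.sum_div, Finset.sum_mul]
    rw [Finset.sum_congr rfl hterm, ← Finset.mul_sum, Finset.sum_comm]
    congr 1
    exact Finset.sum_congr rfl fun s _ => sum_exp q hq (D s)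
  -- back to the reals
  have keyR : (∑ κ ∈ Finset.range q, ∏ j,
        Real.cos (2 * Real.pi * (c j : ℝ) * κ / q) : ℝ)
      = (1/2^m) * ∑ s : Fin m → Bool, (if (q:ℤ) ∣ D s then (q:ℝ) else 0) := by
    apply Complex.ofReal_injective
    rw [key]
    push_cast [apply_ite ((↑·) : ℝ → ℂ)]
    norm_num
  rw [keyR]
  simp only [hcond]
  have h5 : ∑ s : Fin m → Bool, (if (q:ℤ) ∣ D s then (q:ℝ) else 0)
      = (q:ℝ) * ∑ s : Fin m → Bool, (if (q:ℤ) ∣ D s then (1:ℝ) else 0) := by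
    rw [Finset.mul_sum]
    refine Finset.sum_congr rfl fun s _ => ?_
    by_cases h : (q:ℤ) ∣ D s <;> simp [h]
  rw [h5]
  field_simp
end

section
/- For every y ∈ {0,1}^m, every positive integer q, and every integer tuple c = (c₁,...,c_m): (2^m/q)·∑_{κ=0}^{q-1} ∏_{j=1}^m (1 + (-1)^{y_j}·cos(2π·c_j·κ/q)) = ∑_{s,s' ∈ {0,1}^m} (-1)^{y·(s+s')}·[s·c ≡ s'·c (mod q)], where [·] is the indicator function. -/
open scoped Classical

open Complex in
lemma geom_aux16 (q : ℕ) (hq : 0 < q) (t : ℤ) :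
    ∑ κ ∈ Finset.range q, Complex.exp (2 * Real.pi * I * t * κ / q)
      = if (q:ℤ) ∣ t then (q:ℂ) else 0 := by
  have hq0 : (q:ℂ) ≠ 0 := Nat.cast_ne_zero.mpr hq.ne'
  have hπ : (2 * (Real.pi:ℂ) * I) ≠ 0 := by
    simp [Real.pi_ne_zero, I_ne_zero, Complex.ofReal_ne_zero]
  set ζ : ℂ := Complex.exp (2 * Real.pi * I * t / q) with hζ
  have hterm : ∀ κ : ℕ, Complex.exp (2 * Real.pi * I * t * κ / q) = ζ ^ κ := by
    intro κ
    rw [hζ, ← Complex.exp_nat_mul]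
    congr 1
    ring
  simp only [hterm]
  have hζq : ζ ^ q = 1 := by
    rw [hζ, ← Complex.exp_nat_mul]
    have h : (q:ℂ) * (2 * Real.pi * I * t / q) = t * (2 * Real.pi * I) := by
      field_simp
    rw [h, Complex.exp_int_mul, Complex.exp_two_pi_mul_I, one_zpow]
  by_cases h : (q:ℤ) ∣ t
  · obtain ⟨d, rfl⟩ := h
    have hζ1 : ζ = 1 := by
      rw [hζ]
      have h2 : (2:ℂ) * Real.pi * I * ((q * d : ℤ) : ℂ) / q = d * (2 * Real.pi * I) := by
        push_cast; field_simp
      rw [h2, Complex.exp_int_mul, Complex.exp_two_pi_mul_I, one_zpow]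
    simp [hζ1]
  · have hζ1 : ζ ≠ 1 := by
      intro h1
      rw [hζ, Complex.exp_eq_one_iff] at h1
      obtain ⟨n, hn⟩ := h1
      apply h
      have h2 : (t : ℂ) = ((n * q : ℤ) : ℂ) := by
        apply mul_left_cancel₀ hπ
        push_cast
        field_simp at hn
        linear_combination (2 * (Real.pi:ℂ) * I) * hn
      have : t = n * q := by exact_mod_cast h2
      exact ⟨n, by linarith [this]⟩
    rw [geom_sum_eq hζ1, hζq]
    simp [h]

lemma prod_one_add16 {m : ℕ} (a : Fin m → ℂ) :
    ∏ j, (1 + a j) = ∑ s : Fin m → Bool, ∏ j, (if s j then a j else 1) := by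
  have h : ∀ j, (1 + a j) = ∑ b : Bool, (if b then a j else 1) := by
    intro j; simp [add_comm]
  simp_rw [h]
  exact Fintype.prod_sum _

open Complex in
lemma factor_aux16 (ε x : ℂ) (hε : ε * ε = 1) :
    1 + ε * Complex.cos x
      = (1/2) * ((1 + ε * Complex.exp (x * I)) * (1 + ε * Complex.exp (-x * I))) := by
  have h1 : Complex.exp (x*I) * Complex.exp (-x*I) = 1 := by
    rw [← Complex.exp_add]; ring_nf; exact Complex.exp_zero
  have h2 := Complex.two_cos (x := x)
  linear_combination (ε/2) * h2 - (ε*ε/2) * h1 - (1/2) * hε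

/-- Identity relating the cosine sums over κ to signed indicator sums over
pairs of subsets (Lemma on modular subset sums). -/
theorem stmt16 (m q : ℕ) (hq : 0 < q) (c : Fin m → ℤ) (y : Fin m → Bool) :
    ((2:ℝ) ^ m / q) * ∑ κ ∈ Finset.range q, ∏ j,
        (1 + (-1:ℝ) ^ (if y j then 1 else 0)
          * Real.cos (2 * Real.pi * (c j : ℝ) * κ / q))
      = ∑ s : Fin m → Bool, ∑ s' : Fin m → Bool,
          (-1:ℝ) ^ (∑ j, (if y j then 1 else 0) *
              ((if s j then 1 else 0) + (if s' j then (1:ℕ) else 0)))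
            * (if Int.ModEq (q : ℤ) (∑ j, if s j then c j else 0)
                (∑ j, if s' j then c j else 0) then (1:ℝ) else 0) := by
  apply Complex.ofReal_injective
  push_cast [Complex.ofReal_cos, apply_ite (Complex.ofReal)]
  have hq0 : ((q:ℂ)) ≠ 0 := Nat.cast_ne_zero.mpr hq.ne'
  set S : (Fin m → Bool) → ℤ := fun s => ∑ j, if s j = true then c j else 0 with hSd
  have hprod : ∀ κ : ℕ,
      (∏ j, (1 + ((-1:ℂ) ^ if y j = true then 1 else 0)
          * Complex.cos (2 * (Real.pi:ℂ) * (c j : ℂ) * κ / q)))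
      = (1/2:ℂ)^m * ∑ s : Fin m → Bool, ∑ s' : Fin m → Bool,
          ((-1:ℂ) ^ ∑ j, (if y j = true then 1 else 0) *
              ((if s j = true then 1 else 0) + if s' j = true then 1 else 0))
          * Complex.exp (2 * (Real.pi:ℂ) * Complex.I * ((S s - S s' : ℤ):ℂ) * κ / q) := by
    intro κ
    have hεsq : ∀ j : Fin m, ((-1:ℂ) ^ if y j = true then 1 else 0)
        * ((-1:ℂ) ^ if y j = true then 1 else 0) = 1 := by
      intro j; by_cases h : y j <;> simp [h]
    calc ∏ j, (1 + ((-1:ℂ) ^ if y j = true then 1 else 0)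
            * Complex.cos (2 * (Real.pi:ℂ) * (c j : ℂ) * κ / q))
        = ∏ j, ((1/2:ℂ) * ((1 + ((-1:ℂ) ^ if y j = true then 1 else 0)
              * Complex.exp ((2 * (Real.pi:ℂ) * (c j : ℂ) * κ / q) * Complex.I))
            * (1 + ((-1:ℂ) ^ if y j = true then 1 else 0)
              * Complex.exp (-(2 * (Real.pi:ℂ) * (c j : ℂ) * κ / q) * Complex.I)))) := by
          exact Finset.prod_congr rfl fun j _ => factor_aux16 _ _ (hεsq j)
      _ = (1/2:ℂ)^m * ((∏ j, (1 + ((-1:ℂ) ^ if y j = true then 1 else 0)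
              * Complex.exp ((2 * (Real.pi:ℂ) * (c j : ℂ) * κ / q) * Complex.I)))
            * ∏ j, (1 + ((-1:ℂ) ^ if y j = true then 1 else 0)
              * Complex.exp (-(2 * (Real.pi:ℂ) * (c j : ℂ) * κ / q) * Complex.I))) := by
          rw [Finset.prod_mul_distrib, Finset.prod_mul_distrib, Finset.prod_const]
          simp [Finset.card_univ, mul_assoc]
      _ = (1/2:ℂ)^m * ((∑ s : Fin m → Bool, ∏ j,
              (if s j = true then ((-1:ℂ) ^ if y j = true then 1 else 0)
                * Complex.exp ((2 * (Real.pi:ℂ) * (c j : ℂ) * κ / q) * Complex.I) else 1))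
            * ∑ s' : Fin m → Bool, ∏ j,
              (if s' j = true then ((-1:ℂ) ^ if y j = true then 1 else 0)
                * Complex.exp (-(2 * (Real.pi:ℂ) * (c j : ℂ) * κ / q) * Complex.I) else 1)) := by
          rw [prod_one_add16, prod_one_add16]
      _ = (1/2:ℂ)^m * ∑ s : Fin m → Bool, ∑ s' : Fin m → Bool,
            (∏ j, (if s j = true then ((-1:ℂ) ^ if y j = true then 1 else 0)
                * Complex.exp ((2 * (Real.pi:ℂ) * (c j : ℂ) * κ / q) * Complex.I) else 1))
            * ∏ j, (if s' j = true then ((-1:ℂ) ^ if y j = true then 1 else 0)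
                * Complex.exp (-(2 * (Real.pi:ℂ) * (c j : ℂ) * κ / q) * Complex.I) else 1) := by
          rw [Finset.sum_mul_sum]
      _ = _ := by
          congr 1
          refine Finset.sum_congr rfl fun s _ => Finset.sum_congr rfl fun s' _ => ?_
          have hfac : ∀ j : Fin m,
              (if s j = true then ((-1:ℂ) ^ if y j = true then 1 else 0)
                * Complex.exp ((2 * (Real.pi:ℂ) * (c j : ℂ) * κ / q) * Complex.I) else 1)
              * (if s' j = true then ((-1:ℂ) ^ if y j = true then 1 else 0)
                * Complex.exp (-(2 * (Real.pi:ℂ) * (c j : ℂ) * κ / q) * Complex.I) else 1)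
            = ((-1:ℂ) ^ ((if y j = true then 1 else 0) *
                ((if s j = true then 1 else 0) + if s' j = true then 1 else 0)))
              * Complex.exp ((2 * (Real.pi:ℂ) * Complex.I * κ / q) *
                  (((if s j = true then c j else 0) - (if s' j = true then c j else 0) : ℤ) : ℂ)) := by
            intro j
            set A := Complex.exp ((2 * (Real.pi:ℂ) * (c j : ℂ) * κ / q) * Complex.I) with hA
            set B := Complex.exp (-(2 * (Real.pi:ℂ) * (c j : ℂ) * κ / q) * Complex.I) with hB
            set e : ℕ := (if y j = true then 1 else 0) with he
            have hAB : A * B = 1 := by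
              rw [hA, hB, ← Complex.exp_add]; ring_nf; exact Complex.exp_zero
            rcases Bool.dichotomy (s j) with hs | hs <;>
              rcases Bool.dichotomy (s' j) with hs' | hs' <;>
              simp only [hs, hs', Bool.false_eq_true, if_true, if_false]
            · simp
            · simp only [zero_add, mul_one, one_mul]
              congr 1
              rw [hB]
              congr 1
              push_cast
              ring
            · simp only [add_zero, mul_one, one_mul]
              congr 1
              rw [hA]
              congr 1
              push_cast
              ring
            · have h0 : ((c j - c j : ℤ) : ℂ) = 0 := by push_cast; ring
              rw [h0, mul_zero, Complex.exp_zero, mul_one]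
              have : e * (1 + 1) = e * 2 := rfl
              rw [this, pow_mul]
              linear_combination ((-1:ℂ)^e * (-1:ℂ)^e) * hAB
          calc (∏ j, (if s j = true then ((-1:ℂ) ^ if y j = true then 1 else 0)
                  * Complex.exp ((2 * (Real.pi:ℂ) * (c j : ℂ) * κ / q) * Complex.I) else 1))
                * ∏ j, (if s' j = true then ((-1:ℂ) ^ if y j = true then 1 else 0)
                  * Complex.exp (-(2 * (Real.pi:ℂ) * (c j : ℂ) * κ / q) * Complex.I) else 1)
              = ∏ j, (((-1:ℂ) ^ ((if y j = true then 1 else 0) *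
                    ((if s j = true then 1 else 0) + if s' j = true then 1 else 0)))
                  * Complex.exp ((2 * (Real.pi:ℂ) * Complex.I * κ / q) *
                      (((if s j = true then c j else 0) - (if s' j = true then c j else 0) : ℤ) : ℂ))) := by
                rw [← Finset.prod_mul_distrib]
                exact Finset.prod_congr rfl fun j _ => hfac j
            _ = _ := by
                rw [Finset.prod_mul_distrib, Finset.prod_pow_eq_pow_sum, ← Complex.exp_sum]
                congr 1
                rw [← Finset.mul_sum]
                have hsum : (∑ j, ((((if s j = true then c j else 0)
                      - (if s' j = true then c j else 0) : ℤ)) : ℂ))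
                    = ((S s - S s' : ℤ) : ℂ) := by
                  rw [hSd]
                  push_cast [apply_ite (Int.cast : ℤ → ℂ)]
                  rw [Finset.sum_sub_distrib]
                rw [hsum]
                ring
  calc (2:ℂ)^m / q * ∑ κ ∈ Finset.range q, ∏ j, (1 + ((-1:ℂ) ^ if y j = true then 1 else 0)
          * Complex.cos (2 * (Real.pi:ℂ) * (c j : ℂ) * κ / q))
      = (2:ℂ)^m / q * ((1/2:ℂ)^m * ∑ κ ∈ Finset.range q, ∑ s : Fin m → Bool, ∑ s' : Fin m → Bool,
          ((-1:ℂ) ^ ∑ j, (if y j = true then 1 else 0) *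
              ((if s j = true then 1 else 0) + if s' j = true then 1 else 0))
          * Complex.exp (2 * (Real.pi:ℂ) * Complex.I * ((S s - S s' : ℤ):ℂ) * κ / q)) := by
        rw [Finset.sum_congr rfl fun κ _ => hprod κ, ← Finset.mul_sum]
    _ = (1/(q:ℂ)) * ∑ s : Fin m → Bool, ∑ s' : Fin m → Bool,
          ((-1:ℂ) ^ ∑ j, (if y j = true then 1 else 0) *
              ((if s j = true then 1 else 0) + if s' j = true then 1 else 0))
          * ∑ κ ∈ Finset.range q, Complex.exp (2 * (Real.pi:ℂ) * Complex.I * ((S s - S s' : ℤ):ℂ) * κ / q) := by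
        rw [Finset.sum_comm]
        have h2m : (2:ℂ)^m / q * (1/2:ℂ)^m = 1/(q:ℂ) := by
          rw [div_mul_eq_mul_div, mul_comm ((2:ℂ)^m), ← mul_pow]
          norm_num
        rw [← mul_assoc, h2m]
        congr 1
        refine Finset.sum_congr rfl fun s _ => ?_
        rw [Finset.sum_comm]
        refine Finset.sum_congr rfl fun s' _ => ?_
        rw [← Finset.mul_sum]
    _ = _ := by
        rw [Finset.mul_sum]
        refine Finset.sum_congr rfl fun s _ => ?_
        rw [Finset.mul_sum]
        refine Finset.sum_congr rfl fun s' _ => ?_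
        rw [geom_aux16 q hq (S s - S s')]
        have hiff : ((q:ℤ) ∣ (S s - S s')) ↔ Int.ModEq (q:ℤ) (S s) (S s') := by
          rw [Int.modEq_iff_dvd]
          exact dvd_sub_comm
        by_cases h : Int.ModEq (q:ℤ) (S s) (S s')
        · rw [if_pos (hiff.mpr h), if_pos h]
          field_simp
        · rw [if_neg (fun hd => h (hiff.mp hd)), if_neg h]
          simp
end

section
/- Let V be a symmetric m×m matrix over F₂, and let d, e be independent uniform random vectors in F₂^m. Then P(d·V·eᵀ = 0) = (1/2)·(1 + 2^{-rank(V)}). -/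
open Finset Module Matrix

lemma card_ker_filter {n : ℕ} {N : Type*} [AddCommGroup N] [Module (ZMod 2) N]
    (f : (Fin n → ZMod 2) →ₗ[ZMod 2] N) [DecidablePred fun x => f x = 0] :
    (Finset.univ.filter (fun x => f x = 0)).card
      = 2 ^ (n - finrank (ZMod 2) (LinearMap.range f)) := by
  classical
  have h1 : (Finset.univ.filter (fun x => f x = 0)).card
      = Fintype.card (LinearMap.ker f) := by
    rw [Fintype.card_subtype]
    apply Finset.card_bij (fun x _ => x) <;> simp [LinearMap.mem_ker]
  have h2 : Fintype.card (LinearMap.ker f)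
      = Fintype.card (ZMod 2) ^ finrank (ZMod 2) (LinearMap.ker f) :=
    card_eq_pow_finrank
  have h3 : finrank (ZMod 2) (LinearMap.range f) + finrank (ZMod 2) (LinearMap.ker f)
      = n := by
    rw [LinearMap.finrank_range_add_finrank_ker]; simp [finrank_pi]
  have h4 : finrank (ZMod 2) (LinearMap.ker f)
      = n - finrank (ZMod 2) (LinearMap.range f) := by omega
  rw [h1, h2, h4, ZMod.card]

def dotL {n : ℕ} (w : Fin n → ZMod 2) : (Fin n → ZMod 2) →ₗ[ZMod 2] ZMod 2 where
  toFun e := w ⬝ᵥ e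
  map_add' x y := by simp [dotProduct, mul_add, Finset.sum_add_distrib]
  map_smul' c x := by
    simp [dotProduct, Finset.mul_sum]
    exact Finset.sum_congr rfl fun i _ => by ring

lemma range_dotL {n : ℕ} {w : Fin n → ZMod 2} (hw : w ≠ 0) :
    finrank (ZMod 2) (LinearMap.range (dotL w)) = 1 := by
  have hsurj : Function.Surjective (dotL w) := by
    obtain ⟨j, hj⟩ : ∃ j, w j ≠ 0 := by
      by_contra h; push_neg at h; exact hw (funext h)
    have hj1 : w j = 1 := by
      have : ∀ a : ZMod 2, a ≠ 0 → a = 1 := by decide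
      exact this _ hj
    intro c
    refine ⟨c • Pi.single j 1, ?_⟩
    simp [dotL, dotProduct, Pi.single_apply, mul_comm, hj1]
  rw [LinearMap.range_eq_top.mpr hsurj, finrank_top, finrank_self]

lemma card_dot_zero {n : ℕ} (w : Fin n → ZMod 2) [DecidablePred fun e : Fin n → ZMod 2 => w ⬝ᵥ e = 0] :
    (Finset.univ.filter (fun e : Fin n → ZMod 2 => w ⬝ᵥ e = 0)).card
      = if w = 0 then 2 ^ n else 2 ^ (n - 1) := by
  classical
  by_cases hw : w = 0
  · subst hw; simp [zero_dotProduct]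
  · rw [if_neg hw]
    have : (Finset.univ.filter (fun e : Fin n → ZMod 2 => w ⬝ᵥ e = 0))
        = (Finset.univ.filter (fun e => dotL w e = 0)) := by
      apply Finset.filter_congr; intro e _; rfl
    rw [this, card_ker_filter, range_dotL hw]

/-- For a symmetric matrix V over F₂ of rank r, the probability that two
independent uniform vectors d, e satisfy d·V·eᵀ = 0 is (1/2)(1 + 2^{-r}). -/
theorem stmt19 {m : ℕ} (V : Matrix (Fin m) (Fin m) (ZMod 2)) (hV : V.IsSymm) :
    ((Finset.univ.filter (fun de : (Fin m → ZMod 2) × (Fin m → ZMod 2) =>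
        (∑ i, ∑ j, de.1 i * V i j * de.2 j) = 0)).card : ℝ) / (4:ℝ) ^ m
      = (1 / 2) * (1 + (2:ℝ) ^ (-(V.rank : ℤ))) := by
  classical
  set r := V.rank with hr
  have hrm : r ≤ m := V.rank_le_width
  -- rewrite the inner sum as dot product
  have hdot : ∀ d e : Fin m → ZMod 2,
      (∑ i, ∑ j, d i * V i j * e j) = (d ᵥ* V) ⬝ᵥ e := by
    intro d e
    simp only [dotProduct, Matrix.vecMul, Finset.sum_mul]
    rw [show (∑ x : Fin m, ∑ i : Fin m, d i * V i x * e x)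
        = ∑ i : Fin m, ∑ x : Fin m, d i * V i x * e x from Finset.sum_comm]
  -- counting
  have hcard : (Finset.univ.filter (fun de : (Fin m → ZMod 2) × (Fin m → ZMod 2) =>
        (∑ i, ∑ j, de.1 i * V i j * de.2 j) = 0)).card
      = 2 ^ (m - r) * 2 ^ m + (2 ^ m - 2 ^ (m - r)) * 2 ^ (m - 1) := by
    rw [Finset.card_filter, Fintype.sum_prod_type]
    have step1 : ∀ d : Fin m → ZMod 2,
        (∑ e : Fin m → ZMod 2, if (∑ i, ∑ j, d i * V i j * e j) = 0 then 1 else 0)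
          = if d ᵥ* V = 0 then 2 ^ m else 2 ^ (m - 1) := by
      intro d
      have : (∑ e : Fin m → ZMod 2, if (∑ i, ∑ j, d i * V i j * e j) = 0 then 1 else 0)
          = (Finset.univ.filter (fun e : Fin m → ZMod 2 => (d ᵥ* V) ⬝ᵥ e = 0)).card := by
        rw [Finset.card_filter]
        exact Finset.sum_congr rfl fun e _ => by rw [hdot]
      rw [this, card_dot_zero]
    simp only [step1]
    rw [Finset.sum_ite, Finset.sum_const, Finset.sum_const, smul_eq_mul, smul_eq_mul]
    have hker : (Finset.univ.filter (fun d : Fin m → ZMod 2 => d ᵥ* V = 0)).card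
        = 2 ^ (m - r) := by
      have heq : (Finset.univ.filter (fun d : Fin m → ZMod 2 => d ᵥ* V = 0))
          = (Finset.univ.filter (fun d => V.mulVecLin d = 0)) := by
        apply Finset.filter_congr; intro d _
        rw [Matrix.mulVecLin_apply, ← Matrix.vecMul_transpose, hV.eq]
      rw [heq, card_ker_filter]
      rfl
    have hcompl : (Finset.univ.filter (fun d : Fin m → ZMod 2 => ¬ d ᵥ* V = 0)).card
        = 2 ^ m - 2 ^ (m - r) := by
      have := Finset.card_filter_add_card_filter_not
        (s := (Finset.univ : Finset (Fin m → ZMod 2))) (p := fun d => d ᵥ* V = 0)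
      rw [hker] at this
      have hcu : (Finset.univ : Finset (Fin m → ZMod 2)).card = 2 ^ m := by
        simp [Finset.card_univ]
      omega
    rw [hker, hcompl]
  rw [hcard]
  -- real arithmetic
  have h2 : (0:ℝ) < 2 := by norm_num
  have hsub : (2:ℝ) ^ (m - r) = 2 ^ m / 2 ^ r := by
    rw [pow_sub₀ _ (by norm_num) hrm]
    rfl
  have h4m : (4:ℝ) ^ m = 2 ^ m * 2 ^ m := by
    rw [← mul_pow]; norm_num
  have hz : (2:ℝ) ^ (-(r:ℤ)) = ((2:ℝ) ^ r)⁻¹ := by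
    rw [_root_.zpow_neg, zpow_natCast]
  have hle : (2:ℕ) ^ (m - r) ≤ 2 ^ m := Nat.pow_le_pow_right (by norm_num) (Nat.sub_le m r)
  push_cast [Nat.cast_sub hle]
  rw [hsub, h4m, hz]
  have hpm : (0:ℝ) < 2 ^ m := by positivity
  have hpr : (0:ℝ) < 2 ^ r := by positivity
  rcases Nat.eq_zero_or_pos r with hr0 | hrpos
  · rw [hr0]
    simp only [pow_zero, div_one, inv_one]
    field_simp
    ring
  · have hm1 : (2:ℝ) ^ (m - 1) = 2 ^ m / 2 := by
      rw [pow_sub₀ _ (by norm_num) (hrpos.trans_le hrm), pow_one]; ring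
    rw [hm1]
    field_simp
    ring
end
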